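/- Let T be a positive operator on an n-dimensional Hilbert space with trace(T) ≥ n·a and ‖T‖ ≤ M, where a > 0. Then there exists t with 0 < t < a such that ⌈n / rank(P_t)⌉ ≤ ⌈2M/a⌉, where P_t is the spectral projection of T on (t, ∞). -/

import Mathlib

open scoped ComplexOrder

lemma trace_re_eq_sum_eigenvalues {n : ℕ} (T : Matrix (Fin n) (Fin n) ℂ)
    (hT : T.IsHermitian) :
    (Matrix.trace T).re = ∑ i, hT.eigenvalues i := by
  have h : Matrix.trace T = ((∑ i, hT.eigenvalues i : ℝ) : ℂ) := by
    nth_rewrite 1 [hT.spectral_theorem]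
    rw [Unitary.conjStarAlgAut_apply, Matrix.trace_mul_cycle, mul_assoc, ← mul_assoc, Unitary.coe_star_mul_self, one_mul,
      Matrix.trace_diagonal]
    push_cast
    rfl
  rw [h, Complex.ofReal_re]

lemma eigenvalue_le_M {n : ℕ} (hn : 0 < n) (T : Matrix (Fin n) (Fin n) ℂ)
    (hT : T.IsHermitian) (M : ℝ)
    (hnorm : ‖Matrix.toEuclideanCLM (𝕜 := ℂ) T‖ ≤ M) (i : Fin n) :
    hT.eigenvalues i ≤ M := by
  haveI : Nonempty (Fin n) := ⟨⟨0, hn⟩⟩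
  have hmem : (hT.eigenvalues i : ℂ) ∈ spectrum ℂ T := by
    have := hT.eigenvalues_mem_spectrum_real i
    exact spectrum.algebraMap_mem ℂ this
  have hmem' : (hT.eigenvalues i : ℂ) ∈ spectrum ℂ (Matrix.toEuclideanCLM (𝕜 := ℂ) T) := by
    rwa [AlgEquiv.spectrum_eq (Matrix.toEuclideanCLM (𝕜 := ℂ) : Matrix (Fin n) (Fin n) ℂ ≃⋆ₐ[ℂ] _)]
  have := spectrum.norm_le_norm_of_mem hmem'
  calc hT.eigenvalues i ≤ |hT.eigenvalues i| := le_abs_self _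
    _ = ‖(hT.eigenvalues i : ℂ)‖ := by rw [Complex.norm_real, Real.norm_eq_abs]
    _ ≤ ‖Matrix.toEuclideanCLM (𝕜 := ℂ) T‖ := this
    _ ≤ M := hnorm

/-- For a positive `n × n` matrix `T` with trace at least `n·a` and operator norm at
most `M` (a > 0), there exists `t` with `0 < t < a` such that
`⌈n / rank P_t⌉ ≤ ⌈2M/a⌉`, where `rank P_t` is the number of eigenvalues of `T`
exceeding `t`. -/
theorem ceil_rank_bound
    {n : ℕ} (T : Matrix (Fin n) (Fin n) ℂ) (hT : T.PosSemidef)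
    (a M : ℝ) (ha : 0 < a)
    (htrace : (n : ℝ) * a ≤ (Matrix.trace T).re)
    (hnorm : ‖Matrix.toEuclideanCLM (𝕜 := ℂ) T‖ ≤ M) :
    ∃ t : ℝ, 0 < t ∧ t < a ∧
      ⌈(n : ℝ) / (Finset.univ.filter fun i => t < hT.1.eigenvalues i).card⌉
        ≤ ⌈2 * M / a⌉ := by
  refine ⟨a / 2, by linarith, by linarith, ?_⟩
  have hM0 : 0 ≤ M := le_trans (norm_nonneg _) hnorm
  set S := Finset.univ.filter fun i => a / 2 < hT.1.eigenvalues i with hS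
  set k := S.card with hk
  rcases Nat.eq_zero_or_pos n with hn | hn
  · subst hn
    have : k = 0 := by simp [hk, hS]
    rw [this]
    simp only [Nat.cast_zero, div_zero, Int.ceil_zero]
    exact Int.ceil_nonneg (by positivity)
  -- main case
  have hsum : (Matrix.trace T).re = ∑ i, hT.1.eigenvalues i :=
    trace_re_eq_sum_eigenvalues T hT.1
  have hle : ∀ i, hT.1.eigenvalues i ≤ M := eigenvalue_le_M hn T hT.1 M hnorm
  have hnn : ∀ i, 0 ≤ hT.1.eigenvalues i := hT.eigenvalues_nonneg
  have hbound : ∑ i, hT.1.eigenvalues i ≤ (k : ℝ) * M + (n : ℝ) * (a / 2) := by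
    rw [← Finset.sum_filter_add_sum_filter_not Finset.univ
      (fun i => a / 2 < hT.1.eigenvalues i)]
    have h1 : ∑ i ∈ S, hT.1.eigenvalues i ≤ (k : ℝ) * M := by
      calc ∑ i ∈ S, hT.1.eigenvalues i ≤ ∑ _i ∈ S, M :=
            Finset.sum_le_sum fun i _ => hle i
        _ = (k : ℝ) * M := by rw [Finset.sum_const, nsmul_eq_mul]
    have h2 : ∑ i ∈ Finset.univ.filter (fun i => ¬ a / 2 < hT.1.eigenvalues i),
        hT.1.eigenvalues i ≤ (n : ℝ) * (a / 2) := by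
      calc ∑ i ∈ Finset.univ.filter (fun i => ¬ a / 2 < hT.1.eigenvalues i),
            hT.1.eigenvalues i
          ≤ ∑ _i ∈ Finset.univ.filter (fun i => ¬ a / 2 < hT.1.eigenvalues i), (a / 2) :=
            Finset.sum_le_sum fun i hi => by
              simp only [Finset.mem_filter, not_lt] at hi
              exact hi.2
        _ = ((Finset.univ.filter (fun i => ¬ a / 2 < hT.1.eigenvalues i)).card : ℝ) * (a / 2) := by
            rw [Finset.sum_const, nsmul_eq_mul]
        _ ≤ (n : ℝ) * (a / 2) := by
            apply mul_le_mul_of_nonneg_right _ (by linarith)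
            have := Finset.card_filter_le Finset.univ (fun i : Fin n => ¬ a / 2 < hT.1.eigenvalues i)
            simp only [Finset.card_univ, Fintype.card_fin] at this
            exact_mod_cast this
    exact add_le_add h1 h2
  have hkey : (n : ℝ) * a ≤ 2 * M * k := by
    have := le_trans htrace (hsum ▸ hbound)
    nlinarith
  have hkpos : 0 < k := by
    by_contra h
    push_neg at h
    interval_cases k
    have hn' : (0 : ℝ) < n := by exact_mod_cast hn
    nlinarith
  apply Int.ceil_le_ceil
  rw [div_le_div_iff₀ (by exact_mod_cast hkpos) ha]
  linarith [hkey]
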